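/- Let ψ ∈ H be a unit vector that is RFTS with respect to a neighborhood structure 𝒩 = {𝒩_1,…,𝒩_K}. Then for every k ∈ {1,…,K}, [Π_k, Π_k̄] = 0, where Π_k is the orthogonal projection of H onto the extended Schmidt span Σ̄_{𝒩_k}(ψ) and Π_k̄ is the orthogonal projection of H onto ⋂_{j≠k} Σ̄_{𝒩_j}(ψ). -/

import Mathlib

open scoped BigOperators Matrix ComplexOrder

namespace QLS

variable {N : ℕ}

/-- Index type of the full multipartite Hilbert space `⊗ᵢ ℂ^{d i}`. -/
abbrev Idx (d : Fin N → ℕ) : Type := ∀ i, Fin (d i)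

/-- Index type of the Hilbert space `⊗_{i ∈ S} ℂ^{d i}` of a subset `S` of subsystems. -/
abbrev SIdx (d : Fin N → ℕ) (S : Finset (Fin N)) : Type := ∀ i : S, Fin (d i)

/-- Merge an index on `S` and an index on `Sᶜ` into a global index. -/
def merge (d : Fin N → ℕ) (S : Finset (Fin N)) (u : SIdx d S) (w : SIdx d Sᶜ) : Idx d :=
  fun i => if h : i ∈ S then u ⟨i, h⟩ else w ⟨i, Finset.mem_compl.mpr h⟩

/-- Partial trace over the complement of `S`: `Tr_{Sᶜ}`. -/
noncomputable def ptrace (d : Fin N → ℕ) (S : Finset (Fin N))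
    (M : Matrix (Idx d) (Idx d) ℂ) : Matrix (SIdx d S) (SIdx d S) ℂ :=
  fun u v => ∑ w : SIdx d Sᶜ, M (merge d S u w) (merge d S v w)

/-- `X` acts only on the subsystems in `S`, i.e. `X = Y ⊗ I_{Sᶜ}`. -/
def ActsOn (d : Fin N → ℕ) (S : Finset (Fin N)) (X : Matrix (Idx d) (Idx d) ℂ) : Prop :=
  ∃ Y : Matrix (SIdx d S) (SIdx d S) ℂ, ∀ (u u' : SIdx d S) (w w' : SIdx d Sᶜ),
    X (merge d S u w) (merge d S u' w') = if w = w' then Y u u' else 0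

/-- The rank-one projector `|ψ⟩⟨ψ|`. -/
noncomputable def proj (d : Fin N → ℕ) (ψ : Idx d → ℂ) : Matrix (Idx d) (Idx d) ℂ :=
  fun a b => ψ a * (starRingEnd ℂ) (ψ b)

/-- `ψ` is a unit vector. -/
def IsUnitVec (d : Fin N → ℕ) (ψ : Idx d → ℂ) : Prop :=
  ∑ a, Complex.normSq (ψ a) = 1

/-- Superoperators on the multipartite space. -/
abbrev Sop (d : Fin N → ℕ) : Type :=
  Matrix (Idx d) (Idx d) ℂ →ₗ[ℂ] Matrix (Idx d) (Idx d) ℂ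

/-- `E` is completely positive and trace preserving (Kraus form). -/
def IsCPTP (d : Fin N → ℕ) (E : Sop d) : Prop :=
  ∃ (m : ℕ) (K : Fin m → Matrix (Idx d) (Idx d) ℂ),
    (∀ ρ, E ρ = ∑ i, K i * ρ * (K i)ᴴ) ∧ (∑ i, (K i)ᴴ * K i = 1)

/-- `E` is a CPTP map whose Kraus operators all act only on `S`. -/
def IsNeighborhoodMap (d : Fin N → ℕ) (S : Finset (Fin N)) (E : Sop d) : Prop :=
  ∃ (m : ℕ) (K : Fin m → Matrix (Idx d) (Idx d) ℂ),
    (∀ i, ActsOn d S (K i)) ∧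
    (∀ ρ, E ρ = ∑ i, K i * ρ * (K i)ᴴ) ∧ (∑ i, (K i)ᴴ * K i = 1)

/-- A density matrix. -/
def IsDensity (d : Fin N → ℕ) (ρ : Matrix (Idx d) (Idx d) ℂ) : Prop :=
  ρ.PosSemidef ∧ ρ.trace = 1

/-- Sequential composition `E_{T-1} ∘ ⋯ ∘ E_1 ∘ E_0` (index `0` applied first). -/
def seqComp {V : Type*} [AddCommMonoid V] [Module ℂ V] :
    ∀ {T : ℕ}, (Fin T → (V →ₗ[ℂ] V)) → (V →ₗ[ℂ] V)
  | 0, _ => LinearMap.id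
  | T + 1, E => E (Fin.last T) ∘ₗ seqComp fun t => E t.castSucc

/-- Finite-time stabilizability of `ψ` w.r.t. the neighborhood structure `𝒩`. -/
def FTS (d : Fin N → ℕ) {K : ℕ} (𝒩 : Fin K → Finset (Fin N)) (ψ : Idx d → ℂ) : Prop :=
  ∃ (T : ℕ) (E : Fin T → Sop d),
    (∀ t, ∃ k, IsNeighborhoodMap d (𝒩 k) (E t)) ∧
    (∀ t, E t (proj d ψ) = proj d ψ) ∧
    (∀ σ, IsDensity d σ → seqComp E σ = proj d ψ)

/-- Robust finite-time stabilizability: any ordering of the maps prepares `ψ`. -/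
def RFTS (d : Fin N → ℕ) {K : ℕ} (𝒩 : Fin K → Finset (Fin N)) (ψ : Idx d → ℂ) : Prop :=
  ∃ (T : ℕ) (E : Fin T → Sop d),
    (∀ t, ∃ k, IsNeighborhoodMap d (𝒩 k) (E t)) ∧
    (∀ t, E t (proj d ψ) = proj d ψ) ∧
    (∀ π : Equiv.Perm (Fin T), ∀ σ, IsDensity d σ → seqComp (fun t => E (π t)) σ = proj d ψ)

/-- The Schmidt span of `ψ` on `S`: the range of the reduced state `Tr_{Sᶜ}|ψ⟩⟨ψ|`. -/
noncomputable def schmidtSpan (d : Fin N → ℕ) (S : Finset (Fin N)) (ψ : Idx d → ℂ) :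
    Submodule ℂ (SIdx d S → ℂ) :=
  LinearMap.range (Matrix.mulVecLin (ptrace d S (proj d ψ)))

/-- Slicing a global vector along a fixed index of `Sᶜ` (linear in the vector). -/
def sliceMap (d : Fin N → ℕ) (S : Finset (Fin N)) (w : SIdx d Sᶜ) :
    (Idx d → ℂ) →ₗ[ℂ] (SIdx d S → ℂ) where
  toFun v := fun u => v (merge d S u w)
  map_add' _ _ := rfl
  map_smul' _ _ := rfl

/-- The extended Schmidt span `Σ̄_S(ψ) = Σ_S(ψ) ⊗ H_{Sᶜ}`, described as the set of vectors
all of whose slices along `Sᶜ` lie in the Schmidt span. -/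
noncomputable def extSchmidtSpan (d : Fin N → ℕ) (S : Finset (Fin N)) (ψ : Idx d → ℂ) :
    Submodule ℂ (Idx d → ℂ) :=
  ⨅ w : SIdx d Sᶜ, (schmidtSpan d S ψ).comap (sliceMap d S w)

/-- `P` is the orthogonal projection matrix onto the subspace `V` (Hermitian idempotent
with range `V`). -/
def IsOrthProjOnto {ι : Type*} [Fintype ι] [DecidableEq ι]
    (P : Matrix ι ι ℂ) (V : Submodule ℂ (ι → ℂ)) : Prop :=
  Pᴴ = P ∧ P * P = P ∧ LinearMap.range P.mulVecLin = V

/-- The neighborhood expansion `A^𝒩` of a set of subsystems. -/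
def expand {K : ℕ} (𝒩 : Fin K → Finset (Fin N)) (A : Finset (Fin N)) : Finset (Fin N) :=
  Finset.univ.biUnion fun k => if (𝒩 k ∩ A).Nonempty then 𝒩 k else ∅

/-- Standard sesquilinear dot product. -/
noncomputable def dotc {ι : Type*} [Fintype ι] (u v : ι → ℂ) : ℂ :=
  ∑ a, (starRingEnd ℂ) (u a) * v a

/-- Slicing a global vector along a single site `i`, other coordinates fixed by `a`. -/
def sliceAt (d : Fin N → ℕ) (i : Fin N) (a : Idx d) :
    (Idx d → ℂ) →ₗ[ℂ] (Fin (d i) → ℂ) where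
  toFun v := fun x => v (Function.update a i x)
  map_add' _ _ := rfl
  map_smul' _ _ := rfl

/-- The tensor product `⊗ᵢ tᵢ` of local subspaces, as a subspace of the global space:
the set of vectors all of whose single-site slices lie in the local subspaces. -/
noncomputable def tensorSub (d : Fin N → ℕ) (t : ∀ i, Submodule ℂ (Fin (d i) → ℂ)) :
    Submodule ℂ (Idx d → ℂ) :=
  ⨅ i, ⨅ a : Idx d, (t i).comap (sliceAt d i a)

open Classical in
/-- The operator `X` on the `j`-th factor, amplified by the identity on all other factors. -/
noncomputable def factorMat {M : ℕ} (m : Fin M → ℕ) (j : Fin M)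
    (X : Matrix (Fin (m j)) (Fin (m j)) ℂ) :
    Matrix (∀ l, Fin (m l)) (∀ l, Fin (m l)) ℂ :=
  fun a b => if (∀ l, l ≠ j → a l = b l) then X (a j) (b j) else 0

/-- Partial trace onto a single site `i`. -/
noncomputable def ptrace1 (d : Fin N → ℕ) (i : Fin N) (M : Matrix (Idx d) (Idx d) ℂ) :
    Matrix (Fin (d i)) (Fin (d i)) ℂ :=
  fun x y => ∑ a : Idx d, if a i = x then M a (Function.update a i y) else 0

/-- Local support `H̃ᵢ`: the range of the single-site reduced state of `ψ`. -/
noncomputable def localSupp (d : Fin N → ℕ) (ψ : Idx d → ℂ) (i : Fin N) :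
    Submodule ℂ (Fin (d i) → ℂ) :=
  LinearMap.range (Matrix.mulVecLin (ptrace1 d i (proj d ψ)))

/-- Set of skew-Hermitian matrices commuting with `|ψ⟩⟨ψ|` (the Lie algebra `u_ψ`). -/
noncomputable def stabSet (d : Fin N → ℕ) (ψ : Idx d → ℂ) :
    Set (Matrix (Idx d) (Idx d) ℂ) :=
  {X | Xᴴ = -X ∧ X * proj d ψ = proj d ψ * X}

/-- The Lie algebra `u_{𝒩ₖ,ψ}` of skew-Hermitian stabilizers acting only on `S`. -/
noncomputable def nstabSet (d : Fin N → ℕ) (S : Finset (Fin N)) (ψ : Idx d → ℂ) :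
    Set (Matrix (Idx d) (Idx d) ℂ) :=
  {X | (Xᴴ = -X ∧ X * proj d ψ = proj d ψ * X) ∧ ActsOn d S X}

attribute [local instance 100] LieRing.ofAssociativeRing

/-- The unitary generation property: the real Lie algebra generated by the
neighborhood stabilizer algebras is the full stabilizer algebra `u_ψ`. -/
noncomputable def UnitaryGenProp (d : Fin N → ℕ) {K : ℕ} (𝒩 : Fin K → Finset (Fin N))
    (ψ : Idx d → ℂ) : Prop :=
  ((LieSubalgebra.lieSpan ℝ (Matrix (Idx d) (Idx d) ℂ)
      (⋃ k, nstabSet d (𝒩 k) ψ)) : Set (Matrix (Idx d) (Idx d) ℂ)) = stabSet d ψ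

/-- The unitary stabilizer group `U_ψ` (as a set of matrices). -/
noncomputable def uStab (d : Fin N → ℕ) (ψ : Idx d → ℂ) : Set (Matrix (Idx d) (Idx d) ℂ) :=
  {U | U ∈ Matrix.unitaryGroup (Idx d) ℂ ∧ U * proj d ψ * Uᴴ = proj d ψ}

/-- The neighborhood unitary stabilizer group `U_{𝒩ₖ,ψ}` (as a set of matrices). -/
noncomputable def uNStab (d : Fin N → ℕ) (S : Finset (Fin N)) (ψ : Idx d → ℂ) :
    Set (Matrix (Idx d) (Idx d) ℂ) :=
  {U | (U ∈ Matrix.unitaryGroup (Idx d) ℂ ∧ U * proj d ψ * Uᴴ = proj d ψ) ∧ ActsOn d S U}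

/-- `x log x` with the convention `0 log 0 = 0`. -/
noncomputable def entAux (x : ℝ) : ℝ := if x = 0 then 0 else x * Real.log x

open Classical in
/-- Von Neumann entropy of a (Hermitian) matrix. -/
noncomputable def vnEntropy {n : Type*} [Fintype n] [DecidableEq n]
    (σ : Matrix n n ℂ) : ℝ :=
  if h : σ.IsHermitian then -∑ i, entAux (h.eigenvalues i) else 0



/-! ### Auxiliary lemmas for the proof of `rfts_commuting_projectors` -/

section Aux

open Matrix

variable {N : ℕ} {d : Fin N → ℕ}

/-! #### `dotc` lemmas -/

section Dotc

variable {ι : Type*} [Fintype ι]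

lemma dotc_zero_right (x : ι → ℂ) : dotc x (0 : ι → ℂ) = 0 := by
  simp [dotc]

lemma dotc_smul_right (x y : ι → ℂ) (c : ℂ) : dotc x (c • y) = c * dotc x y := by
  simp only [dotc, Pi.smul_apply, smul_eq_mul, Finset.mul_sum]
  exact Finset.sum_congr rfl fun a _ => by ring

lemma dotc_smul_left (x y : ι → ℂ) (c : ℂ) :
    dotc (c • x) y = (starRingEnd ℂ) c * dotc x y := by
  simp only [dotc, Pi.smul_apply, smul_eq_mul, _root_.map_mul, Finset.mul_sum]
  exact Finset.sum_congr rfl fun a _ => by ring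

lemma dotc_sub_left (x y z : ι → ℂ) : dotc (x - y) z = dotc x z - dotc y z := by
  simp only [dotc, Pi.sub_apply, map_sub, sub_mul, Finset.sum_sub_distrib]

lemma dotc_sub_right (x y z : ι → ℂ) : dotc x (y - z) = dotc x y - dotc x z := by
  simp only [dotc, Pi.sub_apply, mul_sub, Finset.sum_sub_distrib]

lemma dotc_conj (x y : ι → ℂ) : dotc y x = (starRingEnd ℂ) (dotc x y) := by
  simp only [dotc, _root_.map_sum, _root_.map_mul, Complex.conj_conj]
  exact Finset.sum_congr rfl fun a _ => by ring

lemma dotc_self_eq_zero {x : ι → ℂ} (h : dotc x x = 0) : x = 0 := by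
  have h2 : ∑ a, Complex.normSq (x a) = 0 := by
    have h3 : ((∑ a, Complex.normSq (x a) : ℝ) : ℂ) = 0 := by
      push_cast
      rw [← h]
      exact Finset.sum_congr rfl fun a _ => by
        rw [← Complex.normSq_eq_conj_mul_self]
    exact_mod_cast h3
  funext a
  have h4 := (Finset.sum_eq_zero_iff_of_nonneg
    (fun a _ => Complex.normSq_nonneg (x a))).mp h2 a (Finset.mem_univ a)
  exact Complex.normSq_eq_zero.mp h4

lemma dotc_sum_right {κ : Type*} (s : Finset κ) (x : ι → ℂ) (f : κ → ι → ℂ) :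
    dotc x (∑ i ∈ s, f i) = ∑ i ∈ s, dotc x (f i) := by
  simp only [dotc, Finset.sum_apply, Finset.mul_sum]
  exact Finset.sum_comm

lemma dotc_mulVec_left (M : Matrix ι ι ℂ) (x y : ι → ℂ) :
    dotc (M.mulVec x) y = dotc x (Mᴴ.mulVec y) := by
  simp only [dotc, Matrix.mulVec, dotProduct, Matrix.conjTranspose_apply,
    ← starRingEnd_apply, _root_.map_sum, _root_.map_mul, Finset.sum_mul, Finset.mul_sum]
  rw [Finset.sum_comm]
  exact Finset.sum_congr rfl fun a _ => Finset.sum_congr rfl fun b _ => by ring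

lemma dotc_mulVec_right (M : Matrix ι ι ℂ) (x y : ι → ℂ) :
    dotc x (M.mulVec y) = dotc (Mᴴ.mulVec x) y := by
  rw [dotc_mulVec_left, Matrix.conjTranspose_conjTranspose]

end Dotc

/-! #### outer products -/

/-- The outer product `|x⟩⟨y|`. -/
noncomputable def outerM {ι : Type*} (x y : ι → ℂ) : Matrix ι ι ℂ :=
  Matrix.of fun a b => x a * (starRingEnd ℂ) (y b)

lemma proj_eq_outerM (ψ : Idx d → ℂ) : proj d ψ = outerM ψ ψ := rfl

section Outer

variable {ι : Type*} [Fintype ι]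

lemma outerM_mulVec (x y z : ι → ℂ) : (outerM x y).mulVec z = dotc y z • x := by
  funext a
  show ∑ b, (x a * (starRingEnd ℂ) (y b)) * z b = (∑ b, (starRingEnd ℂ) (y b) * z b) * x a
  rw [Finset.sum_mul]
  exact Finset.sum_congr rfl fun b _ => by ring

lemma sum_mulVec' {κ : Type*} (s : Finset κ) (A : κ → Matrix ι ι ℂ) (z : ι → ℂ) :
    (∑ i ∈ s, A i).mulVec z = ∑ i ∈ s, (A i).mulVec z := by
  funext a
  simp only [Matrix.mulVec, dotProduct, Finset.sum_apply, Matrix.sum_apply,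
    Finset.sum_mul]
  exact Finset.sum_comm

lemma mul_outerM (Km : Matrix ι ι ℂ) (x y : ι → ℂ) :
    Km * outerM x y = outerM (Km.mulVec x) y := by
  ext a b
  rw [Matrix.mul_apply]
  show ∑ p, Km a p * (x p * (starRingEnd ℂ) (y b))
      = (∑ p, Km a p * x p) * (starRingEnd ℂ) (y b)
  rw [Finset.sum_mul]
  exact Finset.sum_congr rfl fun p _ => by ring

lemma outerM_mul_conjT (L : Matrix ι ι ℂ) (x y : ι → ℂ) :
    outerM x y * Lᴴ = outerM x (L.mulVec y) := by
  ext a b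
  rw [Matrix.mul_apply]
  show ∑ q, (x a * (starRingEnd ℂ) (y q)) * Lᴴ q b
      = x a * (starRingEnd ℂ) (∑ q, L b q * y q)
  simp only [Matrix.conjTranspose_apply, ← starRingEnd_apply, _root_.map_sum, _root_.map_mul,
    Finset.mul_sum]
  exact Finset.sum_congr rfl fun q _ => by ring

lemma mul_outerM_mul (Km L : Matrix ι ι ℂ) (x y : ι → ℂ) :
    Km * outerM x y * Lᴴ = outerM (Km.mulVec x) (L.mulVec y) := by
  rw [mul_outerM, outerM_mul_conjT]

lemma outerM_smul_smul (x y : ι → ℂ) (c e : ℂ) :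
    outerM (c • x) (e • y) = (c * (starRingEnd ℂ) e) • outerM x y := by
  ext a b
  simp only [outerM, Matrix.of_apply, Pi.smul_apply, smul_eq_mul, Matrix.smul_apply]
  rw [_root_.map_mul]
  ring

lemma outerM_self_posSemidef (x : ι → ℂ) : (outerM x x).PosSemidef := by
  rw [Matrix.posSemidef_iff_dotProduct_mulVec]
  constructor
  · ext a b
    simp only [outerM, Matrix.conjTranspose_apply, Matrix.of_apply, ← starRingEnd_apply,
      _root_.map_mul, Complex.conj_conj]
    ring
  · intro z
    have h1 : dotProduct (star z) ((outerM x x).mulVec z)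
        = dotc x z * (starRingEnd ℂ) (dotc x z) := by
      rw [outerM_mulVec]
      simp only [dotProduct, Pi.smul_apply, smul_eq_mul, Pi.star_apply, RCLike.star_def,
        dotc, _root_.map_sum, _root_.map_mul, Complex.conj_conj, Finset.sum_mul, Finset.mul_sum]
      refine Finset.sum_congr rfl fun a _ => Finset.sum_congr rfl fun b _ => by ring
    rw [h1, Complex.mul_conj]
    exact Complex.zero_le_real.mpr (Complex.normSq_nonneg _)

lemma outerM_trace (x : ι → ℂ) : (outerM x x).trace = dotc x x := by
  simp only [Matrix.trace, Matrix.diag, outerM, Matrix.of_apply, dotc]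
  exact Finset.sum_congr rfl fun a _ => by ring

end Outer

/-! #### `merge` and slicing -/

lemma merge_res (S : Finset (Fin N)) (a : Idx d) :
    merge d S (fun i => a i) (fun i => a i) = a := by
  funext i
  unfold merge
  split <;> rfl

lemma res_merge_left (S : Finset (Fin N)) (u : SIdx d S) (w : SIdx d Sᶜ) :
    (fun i : {x // x ∈ S} => merge d S u w i) = u := by
  funext i
  show merge d S u w i = u i
  unfold merge
  rw [dif_pos i.2]

lemma res_merge_right (S : Finset (Fin N)) (u : SIdx d S) (w : SIdx d Sᶜ) :
    (fun i : {x // x ∈ Sᶜ} => merge d S u w i) = w := by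
  funext i
  show merge d S u w i = w i
  unfold merge
  rw [dif_neg (Finset.mem_compl.mp i.2)]

/-- Splitting a global index into its `S` part and its `Sᶜ` part. -/
def mergeEquiv (d : Fin N → ℕ) (S : Finset (Fin N)) : (SIdx d S × SIdx d Sᶜ) ≃ Idx d where
  toFun p := merge d S p.1 p.2
  invFun a := (fun i => a i, fun i => a i)
  left_inv p := Prod.ext (res_merge_left S p.1 p.2) (res_merge_right S p.1 p.2)
  right_inv a := merge_res S a

lemma sum_idx {M : Type*} [AddCommMonoid M] (S : Finset (Fin N)) (f : Idx d → M) :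
    ∑ a, f a = ∑ w : SIdx d Sᶜ, ∑ u : SIdx d S, f (merge d S u w) := by
  rw [← Equiv.sum_comp (mergeEquiv d S) f]
  rw [Fintype.sum_prod_type]
  exact Finset.sum_comm

lemma merge_inj (S : Finset (Fin N)) {u u' : SIdx d S} {w w' : SIdx d Sᶜ}
    (h : merge d S u w = merge d S u' w') : u = u' ∧ w = w' := by
  have h2 := (mergeEquiv d S).injective (a₁ := (u, w)) (a₂ := (u', w')) h
  exact ⟨congrArg Prod.fst h2, congrArg Prod.snd h2⟩

lemma actsOn_mulVec {S : Finset (Fin N)} {Km : Matrix (Idx d) (Idx d) ℂ}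
    {y : Matrix (SIdx d S) (SIdx d S) ℂ}
    (hY : ∀ (u u' : SIdx d S) (w w' : SIdx d Sᶜ),
      Km (merge d S u w) (merge d S u' w') = if w = w' then y u u' else 0)
    (z : Idx d → ℂ) (w : SIdx d Sᶜ) (u : SIdx d S) :
    Km.mulVec z (merge d S u w) = y.mulVec (fun u' => z (merge d S u' w)) u := by
  show ∑ a, Km (merge d S u w) a * z a = ∑ u', y u u' * z (merge d S u' w)
  rw [sum_idx S (fun a => Km (merge d S u w) a * z a), Finset.sum_comm]
  refine Finset.sum_congr rfl fun u' _ => ?_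
  rw [Finset.sum_eq_single w]
  · rw [hY, if_pos rfl]
  · intro w' _ hne
    rw [hY, if_neg (fun h => hne h.symm), zero_mul]
  · intro h
    exact absurd (Finset.mem_univ w) h

/-! #### eigenvector lemma on the extended Schmidt span -/

lemma ptrace_proj_apply (S : Finset (Fin N)) (ψ : Idx d → ℂ) (u u' : SIdx d S) :
    ptrace d S (proj d ψ) u u'
      = ∑ w, ψ (merge d S u w) * (starRingEnd ℂ) (ψ (merge d S u' w)) := rfl

lemma ptrace_proj_herm (S : Finset (Fin N)) (ψ : Idx d → ℂ) :
    (ptrace d S (proj d ψ))ᴴ = ptrace d S (proj d ψ) := by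
  ext u u'
  simp only [Matrix.conjTranspose_apply, ptrace_proj_apply, ← starRingEnd_apply,
    _root_.map_sum, _root_.map_mul, Complex.conj_conj]
  exact Finset.sum_congr rfl fun w _ => by ring

lemma mem_extSchmidtSpan_iff {S : Finset (Fin N)} {ψ v : Idx d → ℂ} :
    v ∈ extSchmidtSpan d S ψ ↔ ∀ w : SIdx d Sᶜ,
      (fun u => v (merge d S u w)) ∈
        LinearMap.range (ptrace d S (proj d ψ)).mulVecLin := by
  constructor
  · intro hv w
    exact Submodule.mem_comap.mp ((Submodule.mem_iInf _).mp hv w)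
  · intro hv
    exact (Submodule.mem_iInf _).mpr fun w => Submodule.mem_comap.mpr (hv w)

lemma actsOn_eigen_ext {S : Finset (Fin N)} {Km : Matrix (Idx d) (Idx d) ℂ}
    (hK : ActsOn d S Km) {ψ : Idx d → ℂ} {c : ℂ}
    (hKψ : Km.mulVec ψ = c • ψ) {v : Idx d → ℂ}
    (hv : v ∈ extSchmidtSpan d S ψ) :
    Km.mulVec v = c • v := by
  obtain ⟨y, hY⟩ := hK
  have hslice : ∀ (w : SIdx d Sᶜ) (u : SIdx d S),
      y.mulVec (fun u' => ψ (merge d S u' w)) u = c * ψ (merge d S u w) := by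
    intro w u
    rw [← actsOn_mulVec hY ψ w u, hKψ]
    rfl
  have hyM : y * ptrace d S (proj d ψ) = c • ptrace d S (proj d ψ) := by
    ext u u'
    rw [Matrix.mul_apply]
    simp only [ptrace_proj_apply, Matrix.smul_apply, smul_eq_mul, Finset.mul_sum]
    rw [Finset.sum_comm]
    refine Finset.sum_congr rfl fun w _ => ?_
    have h2 := hslice w u
    calc ∑ u₁, y u u₁ * (ψ (merge d S u₁ w) * (starRingEnd ℂ) (ψ (merge d S u' w)))
        = (∑ u₁, y u u₁ * ψ (merge d S u₁ w)) * (starRingEnd ℂ) (ψ (merge d S u' w)) := by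
          rw [Finset.sum_mul]
          exact Finset.sum_congr rfl fun u₁ _ => by ring
      _ = (c * ψ (merge d S u w)) * (starRingEnd ℂ) (ψ (merge d S u' w)) := by
          rw [← h2]; rfl
      _ = c * (ψ (merge d S u w) * (starRingEnd ℂ) (ψ (merge d S u' w))) := by ring
  have hv' := mem_extSchmidtSpan_iff.mp hv
  funext a
  have ha : a = merge d S (fun i => a i) (fun i => a i) := (merge_res S a).symm
  rw [ha]
  rw [actsOn_mulVec hY v (fun i => a i) (fun i => a i)]
  obtain ⟨z, hz⟩ := hv' (fun i => a i)
  rw [Matrix.mulVecLin_apply] at hz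
  rw [← hz, Matrix.mulVec_mulVec, hyM, Matrix.smul_mulVec]
  show c * ((ptrace d S (proj d ψ)).mulVec z _) = c • v _
  rw [hz]
  rfl

/-! #### `ψ` lies in its own extended Schmidt span -/

lemma psi_mem_ext (S : Finset (Fin N)) (ψ : Idx d → ℂ) : ψ ∈ extSchmidtSpan d S ψ := by
  classical
  set B : Matrix (SIdx d S) (SIdx d Sᶜ) ℂ := Matrix.of fun u w => ψ (merge d S u w) with hB
  have hMB : ptrace d S (proj d ψ) = B * Bᴴ := by
    ext u u'
    rw [ptrace_proj_apply, Matrix.mul_apply]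
    exact Finset.sum_congr rfl fun w _ => rfl
  have hle : LinearMap.range (B * Bᴴ).mulVecLin ≤ LinearMap.range B.mulVecLin := by
    rintro x ⟨z, rfl⟩
    exact ⟨Bᴴ.mulVec z, by
      rw [Matrix.mulVecLin_apply, Matrix.mulVecLin_apply, Matrix.mulVec_mulVec]⟩
  have hrank : (B * Bᴴ).rank = B.rank := Matrix.rank_self_mul_conjTranspose B
  have hrange : LinearMap.range (B * Bᴴ).mulVecLin = LinearMap.range B.mulVecLin :=
    Submodule.eq_of_le_of_finrank_le hle (le_of_eq hrank.symm)
  refine mem_extSchmidtSpan_iff.mpr fun w => ?_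
  rw [hMB, hrange]
  refine ⟨Pi.single w 1, ?_⟩
  rw [Matrix.mulVecLin_apply, Matrix.mulVec_single_one]
  rfl

/-! #### Kraus operators of a `ψ`-fixing map have `ψ` as eigenvector -/

lemma sum_outer_eq_outer {ι : Type*} [Fintype ι] {m : ℕ} {x : Fin m → ι → ℂ} {ψ : ι → ℂ}
    (hψ : dotc ψ ψ = 1)
    (h : ∑ i, outerM (x i) (x i) = outerM ψ ψ) (i : Fin m) :
    x i = dotc ψ (x i) • ψ := by
  have hmv : ∀ z : ι → ℂ, (∑ j, outerM (x j) (x j)).mulVec z = ∑ j, dotc (x j) z • x j := by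
    intro z
    rw [sum_mulVec' Finset.univ (fun j => outerM (x j) (x j)) z]
    exact Finset.sum_congr rfl fun j _ => outerM_mulVec _ _ _
  have key : ∀ z : ι → ℂ, dotc ψ z = 0 → dotc (x i) z = 0 := by
    intro z hz
    have h2 := congrArg (fun A : Matrix ι ι ℂ => dotc z (A.mulVec z)) h
    rw [hmv, dotc_sum_right, outerM_mulVec, dotc_smul_right] at h2
    have h3 : ∀ j, dotc z (dotc (x j) z • x j)
        = ((Complex.normSq (dotc (x j) z) : ℝ) : ℂ) := by
      intro j
      rw [dotc_smul_right, dotc_conj (x j) z, ← Complex.mul_conj]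
    have h4 : ((∑ j, Complex.normSq (dotc (x j) z) : ℝ) : ℂ) = 0 := by
      push_cast
      rw [← Finset.sum_congr rfl fun j _ => h3 j]
      rw [h2, hz, zero_mul]
    have h5 : ∑ j, Complex.normSq (dotc (x j) z) = 0 := by exact_mod_cast h4
    have h6 := (Finset.sum_eq_zero_iff_of_nonneg
      (fun j _ => Complex.normSq_nonneg _)).mp h5 i (Finset.mem_univ i)
    exact Complex.normSq_eq_zero.mp h6
  set z : ι → ℂ := x i - dotc ψ (x i) • ψ with hzdef
  have hz : dotc ψ z = 0 := by
    rw [hzdef, dotc_sub_right, dotc_smul_right, hψ, mul_one, sub_self]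
  have h7 : dotc z z = 0 := by
    rw [hzdef, dotc_sub_left, dotc_smul_left]
    rw [← hzdef, key z hz, hz]
    simp
  have h8 := dotc_self_eq_zero h7
  rw [hzdef] at h8
  exact sub_eq_zero.mp h8

lemma kraus_csum {m : ℕ} {Kr : Fin m → Matrix (Idx d) (Idx d) ℂ} {ψ : Idx d → ℂ}
    (hψ : dotc ψ ψ = 1) (h1 : ∑ i, (Kr i)ᴴ * Kr i = 1)
    {c : Fin m → ℂ} (hc : ∀ i, (Kr i).mulVec ψ = c i • ψ) :
    ∑ i, c i * (starRingEnd ℂ) (c i) = 1 := by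
  have h2 : dotc ψ ((∑ i, (Kr i)ᴴ * Kr i).mulVec ψ) = 1 := by
    rw [h1, Matrix.one_mulVec, hψ]
  rw [sum_mulVec' Finset.univ (fun i => (Kr i)ᴴ * Kr i) ψ, dotc_sum_right] at h2
  have h4 : ∀ i, dotc ψ (((Kr i)ᴴ * Kr i).mulVec ψ) = c i * (starRingEnd ℂ) (c i) := by
    intro i
    have h3 : ((Kr i)ᴴ * Kr i).mulVec ψ = (Kr i)ᴴ.mulVec ((Kr i).mulVec ψ) :=
      (Matrix.mulVec_mulVec ψ (Kr i)ᴴ (Kr i)).symm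
    rw [h3, dotc_mulVec_right, Matrix.conjTranspose_conjTranspose, hc i,
      dotc_smul_left, dotc_smul_right, hψ]
    ring
  rw [← h2]
  exact Finset.sum_congr rfl fun i _ => (h4 i).symm

/-! #### partial trace invariance for neighborhood maps -/

lemma pt_invariant {S : Finset (Fin N)} {m : ℕ}
    {Kr : Fin m → Matrix (Idx d) (Idx d) ℂ}
    (hacts : ∀ i, ActsOn d S (Kr i))
    (h1 : ∑ i, (Kr i)ᴴ * Kr i = 1)
    (w₀ : SIdx d Sᶜ) (ρ : Matrix (Idx d) (Idx d) ℂ) (w w' : SIdx d Sᶜ) :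
    ∑ u, (∑ i, Kr i * ρ * (Kr i)ᴴ) (merge d S u w) (merge d S u w')
      = ∑ u, ρ (merge d S u w) (merge d S u w') := by
  classical
  choose y hy using hacts
  have hdelta : ∀ u₁ u₂ : SIdx d S,
      (∑ u, ∑ i, star (y i u u₂) * y i u u₁)
        = if u₂ = u₁ then 1 else 0 := by
    intro u₁ u₂
    have h := Matrix.ext_iff.mpr h1 (merge d S u₂ w₀) (merge d S u₁ w₀)
    rw [Matrix.sum_apply] at h
    have hper : ∀ i, ((Kr i)ᴴ * Kr i) (merge d S u₂ w₀) (merge d S u₁ w₀)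
        = ∑ u, star (y i u u₂) * y i u u₁ := by
      intro i
      rw [Matrix.mul_apply]
      rw [sum_idx S (fun a => (Kr i)ᴴ (merge d S u₂ w₀) a * Kr i a (merge d S u₁ w₀))]
      rw [Finset.sum_eq_single w₀]
      · refine Finset.sum_congr rfl fun u _ => ?_
        rw [Matrix.conjTranspose_apply, hy, hy, if_pos rfl, if_pos rfl]
      · intro w₁ _ hne
        refine Finset.sum_eq_zero fun u _ => ?_
        rw [Matrix.conjTranspose_apply, hy, if_neg hne]
        simp
      · intro hh
        exact absurd (Finset.mem_univ w₀) hh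
    rw [Finset.sum_congr rfl (fun i _ => hper i)] at h
    rw [Finset.sum_comm, h, Matrix.one_apply]
    by_cases hu : u₂ = u₁
    · rw [if_pos (by rw [hu]), if_pos hu]
    · rw [if_neg (fun hh => hu (merge_inj S hh).1), if_neg hu]
  have hexp : ∀ (i : Fin m) (u : SIdx d S),
      (Kr i * ρ * (Kr i)ᴴ) (merge d S u w) (merge d S u w')
      = ∑ u₂, ∑ u₁, y i u u₁ * ρ (merge d S u₁ w) (merge d S u₂ w')
          * star (y i u u₂) := by
    intro i u
    rw [Matrix.mul_apply]
    rw [sum_idx S (fun a => (Kr i * ρ) (merge d S u w) a * (Kr i)ᴴ a (merge d S u w'))]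
    rw [Finset.sum_eq_single w']
    · refine Finset.sum_congr rfl fun u₂ _ => ?_
      rw [Matrix.conjTranspose_apply, hy, if_pos rfl]
      rw [Matrix.mul_apply]
      rw [sum_idx S (fun a => Kr i (merge d S u w) a * ρ a (merge d S u₂ w'))]
      rw [Finset.sum_eq_single w]
      · rw [Finset.sum_mul]
        refine Finset.sum_congr rfl fun u₁ _ => ?_
        rw [hy, if_pos rfl]
      · intro w₁ _ hne
        refine Finset.sum_eq_zero fun u₁ _ => ?_
        rw [hy, if_neg (fun hh => hne hh.symm), zero_mul]
      · intro hh
        exact absurd (Finset.mem_univ w) hh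
    · intro w₂ _ hne
      refine Finset.sum_eq_zero fun u₂ _ => ?_
      rw [Matrix.conjTranspose_apply, hy, if_neg (fun hh => hne hh.symm)]
      simp
    · intro hh
      exact absurd (Finset.mem_univ w') hh
  calc ∑ u, (∑ i, Kr i * ρ * (Kr i)ᴴ) (merge d S u w) (merge d S u w')
      = ∑ u, ∑ i, ∑ u₂, ∑ u₁, y i u u₁ * ρ (merge d S u₁ w) (merge d S u₂ w')
          * star (y i u u₂) := by
        refine Finset.sum_congr rfl fun u _ => ?_
        rw [Matrix.sum_apply]
        exact Finset.sum_congr rfl fun i _ => hexp i u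
    _ = ∑ u, ∑ i, ∑ u₁, ∑ u₂, y i u u₁ * ρ (merge d S u₁ w) (merge d S u₂ w')
          * star (y i u u₂) := by
        exact Finset.sum_congr rfl fun u _ => Finset.sum_congr rfl fun i _ => Finset.sum_comm
    _ = ∑ u, ∑ u₁, ∑ i, ∑ u₂, y i u u₁ * ρ (merge d S u₁ w) (merge d S u₂ w')
          * star (y i u u₂) := by
        exact Finset.sum_congr rfl fun u _ => Finset.sum_comm
    _ = ∑ u₁, ∑ u, ∑ i, ∑ u₂, y i u u₁ * ρ (merge d S u₁ w) (merge d S u₂ w')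
          * star (y i u u₂) := Finset.sum_comm
    _ = ∑ u₁, ∑ u, ∑ u₂, ∑ i, y i u u₁ * ρ (merge d S u₁ w) (merge d S u₂ w')
          * star (y i u u₂) := by
        exact Finset.sum_congr rfl fun u₁ _ => Finset.sum_congr rfl fun u _ => Finset.sum_comm
    _ = ∑ u₁, ∑ u₂, ∑ u, ∑ i, y i u u₁ * ρ (merge d S u₁ w) (merge d S u₂ w')
          * star (y i u u₂) := by
        exact Finset.sum_congr rfl fun u₁ _ => Finset.sum_comm
    _ = ∑ u₁, ∑ u₂, ρ (merge d S u₁ w) (merge d S u₂ w')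
          * ∑ u, ∑ i, star (y i u u₂) * y i u u₁ := by
        refine Finset.sum_congr rfl fun u₁ _ => Finset.sum_congr rfl fun u₂ _ => ?_
        rw [Finset.mul_sum]
        refine Finset.sum_congr rfl fun u _ => ?_
        rw [Finset.mul_sum]
        exact Finset.sum_congr rfl fun i _ => by ring
    _ = ∑ u₁, ∑ u₂, ρ (merge d S u₁ w) (merge d S u₂ w')
          * (if u₂ = u₁ then 1 else 0) := by
        refine Finset.sum_congr rfl fun u₁ _ => Finset.sum_congr rfl fun u₂ _ => ?_
        rw [hdelta]
    _ = ∑ u, ρ (merge d S u w) (merge d S u w') := by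
        refine Finset.sum_congr rfl fun u₁ _ => ?_
        rw [Finset.sum_eq_single u₁]
        · rw [if_pos rfl, mul_one]
        · intro u₂ _ hne
          rw [if_neg hne, mul_zero]
        · intro hh
          exact absurd (Finset.mem_univ u₁) hh

/-! #### channels preparing `ψ` on rank-one inputs -/

lemma seq_outer_eq {ψ : Idx d → ℂ} (hψ : dotc ψ ψ = 1) (Φ : Sop d)
    (hΦ : ∀ σ, IsDensity d σ → Φ σ = proj d ψ) (v : Idx d → ℂ) :
    Φ (outerM v ψ) = dotc ψ v • proj d ψ := by
  have hrank1 : ∀ x : Idx d → ℂ, Φ (outerM x x) = dotc x x • proj d ψ := by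
    intro x
    by_cases hx : x = 0
    · subst hx
      have h0 : outerM (0 : Idx d → ℂ) 0 = 0 := by
        ext a b
        show (0 : Idx d → ℂ) a * (starRingEnd ℂ) ((0 : Idx d → ℂ) b)
            = (0 : Matrix (Idx d) (Idx d) ℂ) a b
        rw [Pi.zero_apply, zero_mul]
        rfl
      rw [h0, map_zero, dotc_zero_right, zero_smul]
    · set t : ℝ := ∑ a, Complex.normSq (x a) with ht
      have htpos : 0 < t := by
        have hex : ∃ a, x a ≠ 0 := by
          by_contra hcon
          push_neg at hcon
          exact hx (funext hcon)
        obtain ⟨a, ha⟩ := hex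
        exact Finset.sum_pos' (fun b _ => Complex.normSq_nonneg _)
          ⟨a, Finset.mem_univ a, Complex.normSq_pos.mpr ha⟩
      have hdxx : dotc x x = (t : ℂ) := by
        rw [ht]
        push_cast
        exact Finset.sum_congr rfl fun a _ => by
          rw [← Complex.normSq_eq_conj_mul_self]
      have htne : (t : ℂ) ≠ 0 := by
        exact_mod_cast htpos.ne'
      have hdens : IsDensity d (((t : ℂ))⁻¹ • outerM x x) := by
        constructor
        · rw [Matrix.posSemidef_iff_dotProduct_mulVec]
          constructor
          · show (((t : ℂ))⁻¹ • outerM x x)ᴴ = ((t : ℂ))⁻¹ • outerM x x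
            rw [Matrix.conjTranspose_smul, (outerM_self_posSemidef x).1]
            congr 1
            rw [star_inv₀, ← starRingEnd_apply, Complex.conj_ofReal]
          · intro z
            have h2 : dotProduct (star z) ((((t : ℂ))⁻¹ • outerM x x).mulVec z)
                = ((t : ℂ))⁻¹ * dotProduct (star z) ((outerM x x).mulVec z) := by
              rw [Matrix.smul_mulVec, dotProduct_smul, smul_eq_mul]
            rw [h2]
            have h3 := (outerM_self_posSemidef x).dotProduct_mulVec_nonneg z
            have h4 : (0:ℂ) ≤ ((t : ℂ))⁻¹ := by
              rw [← Complex.ofReal_inv]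
              exact Complex.zero_le_real.mpr (by positivity)
            exact mul_nonneg h4 h3
        · rw [Matrix.trace_smul, outerM_trace, hdxx, smul_eq_mul, inv_mul_cancel₀ htne]
      have h5 := hΦ _ hdens
      rw [LinearMap.map_smul] at h5
      have h6 := congrArg (fun M => (t : ℂ) • M) h5
      simp only [smul_smul, mul_inv_cancel₀ htne, one_smul] at h6
      rw [h6, hdxx]
  have hmat : outerM v ψ
      = (4⁻¹ : ℂ) • outerM (v + ψ) (v + ψ)
        + (Complex.I * 4⁻¹) • outerM (v + Complex.I • ψ) (v + Complex.I • ψ)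
        - (4⁻¹ : ℂ) • outerM (v - ψ) (v - ψ)
        - (Complex.I * 4⁻¹) • outerM (v - Complex.I • ψ) (v - Complex.I • ψ) := by
    ext a b
    simp only [outerM, Matrix.of_apply, Matrix.add_apply, Matrix.sub_apply, Matrix.smul_apply,
      Pi.add_apply, Pi.sub_apply, Pi.smul_apply, smul_eq_mul, _root_.map_add, _root_.map_sub,
      _root_.map_mul, Complex.conj_I]
    have hI : Complex.I * Complex.I = -1 := Complex.I_mul_I
    linear_combination (2⁻¹ * v a * (starRingEnd ℂ) (ψ b)
      - 2⁻¹ * ψ a * (starRingEnd ℂ) (v b)) * hI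
  have hscal : dotc ψ v
      = (4⁻¹ : ℂ) * dotc (v + ψ) (v + ψ)
        + (Complex.I * 4⁻¹) * dotc (v + Complex.I • ψ) (v + Complex.I • ψ)
        - (4⁻¹ : ℂ) * dotc (v - ψ) (v - ψ)
        - (Complex.I * 4⁻¹) * dotc (v - Complex.I • ψ) (v - Complex.I • ψ) := by
    simp only [dotc, Pi.add_apply, Pi.sub_apply, Pi.smul_apply, smul_eq_mul, _root_.map_add,
      _root_.map_sub, _root_.map_mul, Complex.conj_I, Finset.mul_sum, ← Finset.sum_sub_distrib,
      ← Finset.sum_add_distrib]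
    refine Finset.sum_congr rfl fun a _ => ?_
    have hI : Complex.I * Complex.I = -1 := Complex.I_mul_I
    linear_combination (2⁻¹ * v a * (starRingEnd ℂ) (ψ a)
      - 2⁻¹ * ψ a * (starRingEnd ℂ) (v a)) * hI
  rw [hmat, _root_.map_sub, _root_.map_sub, _root_.map_add, LinearMap.map_smul,
    LinearMap.map_smul, LinearMap.map_smul, LinearMap.map_smul,
    hrank1, hrank1, hrank1, hrank1]
  simp only [smul_smul, ← add_smul, ← sub_smul]
  rw [← hscal]

/-! #### sequential composition lemmas -/

lemma seq_fix {V : Type*} [AddCommMonoid V] [Module ℂ V] :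
    ∀ {T : ℕ} (g : Fin T → (V →ₗ[ℂ] V)) (X : V), (∀ i, g i X = X) → seqComp g X = X
  | 0, _, _, _ => rfl
  | T + 1, g, X, h => by
      show g (Fin.last T) (seqComp (fun t => g t.castSucc) X) = X
      rw [seq_fix (fun t => g t.castSucc) X (fun i => h _), h]

lemma seq_sorted {V α : Type*} [AddCommMonoid V] [Module ℂ V] :
    ∀ {T : ℕ} (g : Fin T → (V →ₗ[ℂ] V)) (X : V) (pt : V → α) (cond : Fin T → Prop),
      (∀ i j : Fin T, i ≤ j → cond j → cond i) →
      (∀ i, cond i → g i X = X) →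
      (∀ i, ¬ cond i → ∀ ρ, pt (g i ρ) = pt ρ) →
      pt (seqComp g X) = pt X
  | 0, _, _, _, _, _, _, _ => rfl
  | T + 1, g, X, pt, cond, hmono, hA, hB => by
      by_cases hc : cond (Fin.last T)
      · rw [seq_fix g X (fun i => hA i (hmono i (Fin.last T) (Fin.le_last i) hc))]
      · have h0 : seqComp g X = g (Fin.last T) (seqComp (fun t => g t.castSucc) X) := rfl
        rw [h0, hB _ hc]
        exact seq_sorted (fun t => g t.castSucc) X pt (fun i => cond i.castSucc)
          (fun i j hij hcj => hmono _ _ (Fin.castSucc_le_castSucc_iff.mpr hij) hcj)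
          (fun i hi => hA _ hi) (fun i hi => hB _ hi)

/-! #### orthogonal projections -/

lemma orthProj_fix {ι : Type*} [Fintype ι] [DecidableEq ι] {P : Matrix ι ι ℂ}
    {V : Submodule ℂ (ι → ℂ)} (h : IsOrthProjOnto P V) {x : ι → ℂ} (hx : x ∈ V) :
    P.mulVec x = x := by
  obtain ⟨hH, hPP, hr⟩ := h
  have hx' : x ∈ LinearMap.range P.mulVecLin := hr ▸ hx
  obtain ⟨z, hz⟩ := hx'
  rw [Matrix.mulVecLin_apply] at hz
  rw [← hz, Matrix.mulVec_mulVec, hPP]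

lemma orthProj_kill {ι : Type*} [Fintype ι] [DecidableEq ι] {P : Matrix ι ι ℂ}
    {V : Submodule ℂ (ι → ℂ)} (h : IsOrthProjOnto P V) {x : ι → ℂ}
    (hx : ∀ y ∈ V, dotc y x = 0) :
    P.mulVec x = 0 := by
  obtain ⟨hH, hPP, hr⟩ := h
  apply dotc_self_eq_zero
  have hmem : P.mulVec x ∈ V := by
    rw [← hr]
    exact ⟨x, rfl⟩
  calc dotc (P.mulVec x) (P.mulVec x)
      = dotc x (Pᴴ.mulVec (P.mulVec x)) := dotc_mulVec_left _ _ _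
    _ = dotc x ((Pᴴ * P).mulVec x) := by rw [Matrix.mulVec_mulVec]
    _ = dotc x (P.mulVec x) := by rw [hH, hPP]
    _ = (starRingEnd ℂ) (dotc (P.mulVec x) x) := dotc_conj _ _
    _ = 0 := by rw [hx _ hmem]; simp

/-! #### the geometric consequence -/

lemma perp_of_pt {S : Finset (Fin N)} {ψ v : Idx d → ℂ}
    (hC : ∀ w w' : SIdx d Sᶜ,
      (∑ u, v (merge d S u w) * (starRingEnd ℂ) (ψ (merge d S u w')))
        = dotc ψ v * ∑ u, ψ (merge d S u w) * (starRingEnd ℂ) (ψ (merge d S u w')))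
    {y : Idx d → ℂ} (hy : y ∈ extSchmidtSpan d S ψ) :
    dotc y (v - dotc ψ v • ψ) = 0 := by
  set r : Idx d → ℂ := v - dotc ψ v • ψ with hrdef
  have hrw : ∀ w w' : SIdx d Sᶜ,
      ∑ u, r (merge d S u w) * (starRingEnd ℂ) (ψ (merge d S u w')) = 0 := by
    intro w w'
    have : ∀ u : SIdx d S, r (merge d S u w) * (starRingEnd ℂ) (ψ (merge d S u w'))
        = v (merge d S u w) * (starRingEnd ℂ) (ψ (merge d S u w'))
          - dotc ψ v * (ψ (merge d S u w) * (starRingEnd ℂ) (ψ (merge d S u w'))) := by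
      intro u
      rw [hrdef]
      simp only [Pi.sub_apply, Pi.smul_apply, smul_eq_mul]
      ring
    rw [Finset.sum_congr rfl fun u _ => this u, Finset.sum_sub_distrib,
      ← Finset.mul_sum, hC w w', sub_self]
  have hMr : ∀ w : SIdx d Sᶜ,
      (ptrace d S (proj d ψ)).mulVec (fun u => r (merge d S u w)) = 0 := by
    intro w
    funext u
    show ∑ u', ptrace d S (proj d ψ) u u' * r (merge d S u' w) = 0
    simp only [ptrace_proj_apply, Finset.sum_mul]
    rw [Finset.sum_comm]
    refine Finset.sum_eq_zero fun w' _ => ?_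
    calc ∑ u', ψ (merge d S u w') * (starRingEnd ℂ) (ψ (merge d S u' w')) * r (merge d S u' w)
        = ψ (merge d S u w')
            * ∑ u', r (merge d S u' w) * (starRingEnd ℂ) (ψ (merge d S u' w')) := by
          rw [Finset.mul_sum]
          exact Finset.sum_congr rfl fun u' _ => by ring
      _ = 0 := by rw [hrw w w', mul_zero]
  show ∑ a, (starRingEnd ℂ) (y a) * r a = 0
  rw [sum_idx S (fun a => (starRingEnd ℂ) (y a) * r a)]
  refine Finset.sum_eq_zero fun w _ => ?_
  obtain ⟨z, hz⟩ := mem_extSchmidtSpan_iff.mp hy w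
  rw [Matrix.mulVecLin_apply] at hz
  have h2 : dotc (fun u => y (merge d S u w)) (fun u => r (merge d S u w)) = 0 := by
    rw [← hz, dotc_mulVec_left, ptrace_proj_herm, hMr w, dotc_zero_right]
  exact h2

end Aux


/-- Proposition 6, commuting projectors: if `ψ` is RFTS with respect to
`𝒩`, then for each `k` the orthogonal projection onto `Σ̄_{𝒩ₖ}(ψ)` commutes with the
orthogonal projection onto `⋂_{j≠k} Σ̄_{𝒩ⱼ}(ψ)`. -/
theorem rfts_commuting_projectors {N K : ℕ} (d : Fin N → ℕ)
    (𝒩 : Fin K → Finset (Fin N)) (ψ : Idx d → ℂ) (hunit : IsUnitVec d ψ)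
    (hRFTS : RFTS d 𝒩 ψ) :
    ∀ k : Fin K, ∀ P Q : Matrix (Idx d) (Idx d) ℂ,
      IsOrthProjOnto P (extSchmidtSpan d (𝒩 k) ψ) →
      IsOrthProjOnto Q (⨅ j : Fin K, ⨅ _ : j ≠ k, extSchmidtSpan d (𝒩 j) ψ) →
      P * Q = Q * P := by
  classical
  intro k P Q hP hQ
  have hψ1 : dotc ψ ψ = 1 := by
    have h0 : dotc ψ ψ = ((∑ a, Complex.normSq (ψ a) : ℝ) : ℂ) := by
      push_cast
      exact Finset.sum_congr rfl fun a _ => by rw [← Complex.normSq_eq_conj_mul_self]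
    rw [h0, hunit]
    norm_num
  have hne : Nonempty (Idx d) := by
    by_contra hcon
    rw [not_nonempty_iff] at hcon
    have h0 : (∑ a, Complex.normSq (ψ a)) = 0 := by
      rw [Finset.univ_eq_empty, Finset.sum_empty]
    rw [hunit] at h0
    norm_num at h0
  have hψW : ψ ∈ ⨅ j : Fin K, ⨅ _ : j ≠ k, extSchmidtSpan d (𝒩 j) ψ :=
    (Submodule.mem_iInf _).mpr fun j => (Submodule.mem_iInf _).mpr fun _ => psi_mem_ext _ ψ
  have key : ∀ v, v ∈ (⨅ j : Fin K, ⨅ _ : j ≠ k, extSchmidtSpan d (𝒩 j) ψ) →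
      P.mulVec v = dotc ψ v • ψ := by
    intro v hv
    obtain ⟨T, E, hN, hfixE, hall⟩ := hRFTS
    choose kk hkk using hN
    set f : Fin T → ℕ := fun t => if kk t = k then 1 else 0 with hf
    set π : Equiv.Perm (Fin T) := Tuple.sort f with hπ
    set g : Fin T → Sop d := fun i => E (π i) with hg
    have hgout : seqComp g (outerM v ψ) = dotc ψ v • proj d ψ :=
      seq_outer_eq hψ1 (seqComp g) (fun σ hσ => hall π σ hσ) v
    obtain ⟨a₀⟩ := hne
    have hmono : ∀ i j : Fin T, i ≤ j → kk (π j) ≠ k → kk (π i) ≠ k := by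
      intro i j hij hcj hki
      have hm := Tuple.monotone_sort f hij
      rw [← hπ] at hm
      simp only [Function.comp_apply, hf] at hm
      rw [if_pos hki, if_neg hcj] at hm
      omega
    have hA : ∀ i, kk (π i) ≠ k → g i (outerM v ψ) = outerM v ψ := by
      intro i hci
      obtain ⟨mI, Kr, hacts, hrep, h1⟩ := hkk (π i)
      have hfixi : ∑ j, Kr j * proj d ψ * (Kr j)ᴴ = proj d ψ := by
        rw [← hrep]
        exact hfixE (π i)
      have houter : ∑ j, outerM ((Kr j).mulVec ψ) ((Kr j).mulVec ψ) = outerM ψ ψ := by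
        rw [← proj_eq_outerM, ← hfixi]
        exact Finset.sum_congr rfl fun j _ => by rw [proj_eq_outerM, mul_outerM_mul]
      have heig : ∀ j, (Kr j).mulVec ψ = dotc ψ ((Kr j).mulVec ψ) • ψ :=
        fun j => sum_outer_eq_outer hψ1 houter j
      have hcsum := kraus_csum hψ1 h1 heig
      have hvmem : v ∈ extSchmidtSpan d (𝒩 (kk (π i))) ψ :=
        (Submodule.mem_iInf _).mp ((Submodule.mem_iInf _).mp hv (kk (π i))) hci
      have heigv : ∀ j, (Kr j).mulVec v = dotc ψ ((Kr j).mulVec ψ) • v :=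
        fun j => actsOn_eigen_ext (hacts j) (heig j) hvmem
      show E (π i) (outerM v ψ) = outerM v ψ
      rw [hrep]
      calc ∑ j, Kr j * outerM v ψ * (Kr j)ᴴ
          = ∑ j, (dotc ψ ((Kr j).mulVec ψ)
              * (starRingEnd ℂ) (dotc ψ ((Kr j).mulVec ψ))) • outerM v ψ := by
            refine Finset.sum_congr rfl fun j _ => ?_
            conv_lhs => rw [mul_outerM_mul, heig j, heigv j, outerM_smul_smul]
        _ = outerM v ψ := by
            rw [← Finset.sum_smul, hcsum, one_smul]
    have hC : ∀ w w' : SIdx d (𝒩 k)ᶜ,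
        (∑ u, v (merge d (𝒩 k) u w) * (starRingEnd ℂ) (ψ (merge d (𝒩 k) u w')))
          = dotc ψ v
            * ∑ u, ψ (merge d (𝒩 k) u w) * (starRingEnd ℂ) (ψ (merge d (𝒩 k) u w')) := by
      intro w w'
      have hB : ∀ i, ¬ (kk (π i) ≠ k) → ∀ ρ : Matrix (Idx d) (Idx d) ℂ,
          (∑ u, (g i ρ) (merge d (𝒩 k) u w) (merge d (𝒩 k) u w'))
            = ∑ u, ρ (merge d (𝒩 k) u w) (merge d (𝒩 k) u w') := by
        intro i hci ρ
        obtain ⟨mI, Kr, hacts, hrep, h1⟩ := hkk (π i)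
        have hkeq : kk (π i) = k := not_not.mp hci
        rw [hkeq] at hacts
        show (∑ u, (E (π i) ρ) (merge d (𝒩 k) u w) (merge d (𝒩 k) u w')) = _
        rw [hrep ρ]
        exact pt_invariant hacts h1 (fun i => a₀ i) ρ w w'
      have hsorted := seq_sorted g (outerM v ψ)
          (fun ρ : Matrix (Idx d) (Idx d) ℂ =>
            ∑ u, ρ (merge d (𝒩 k) u w) (merge d (𝒩 k) u w'))
          (fun i => kk (π i) ≠ k) hmono hA hB
      rw [hgout] at hsorted
      have h3 : ∑ u, (dotc ψ v • proj d ψ) (merge d (𝒩 k) u w) (merge d (𝒩 k) u w')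
          = dotc ψ v
            * ∑ u, ψ (merge d (𝒩 k) u w) * (starRingEnd ℂ) (ψ (merge d (𝒩 k) u w')) := by
        rw [Finset.mul_sum]
        refine Finset.sum_congr rfl fun u _ => ?_
        rw [Matrix.smul_apply, smul_eq_mul]
        rfl
      calc (∑ u, v (merge d (𝒩 k) u w) * (starRingEnd ℂ) (ψ (merge d (𝒩 k) u w')))
          = ∑ u, (outerM v ψ) (merge d (𝒩 k) u w) (merge d (𝒩 k) u w') := rfl
        _ = ∑ u, (dotc ψ v • proj d ψ) (merge d (𝒩 k) u w) (merge d (𝒩 k) u w') :=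
            hsorted.symm
        _ = _ := h3
    have hperp : ∀ y2 ∈ extSchmidtSpan d (𝒩 k) ψ, dotc y2 (v - dotc ψ v • ψ) = 0 :=
      fun y2 hy2 => perp_of_pt hC hy2
    have h0 : P.mulVec (v - dotc ψ v • ψ) = 0 := orthProj_kill hP hperp
    have hPψ : P.mulVec ψ = ψ := orthProj_fix hP (psi_mem_ext _ ψ)
    calc P.mulVec v = P.mulVec ((v - dotc ψ v • ψ) + dotc ψ v • ψ) := by
          rw [sub_add_cancel]
      _ = P.mulVec (v - dotc ψ v • ψ) + P.mulVec (dotc ψ v • ψ) := Matrix.mulVec_add _ _ _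
      _ = dotc ψ v • ψ := by rw [h0, Matrix.mulVec_smul, hPψ, zero_add]
  have hQψ : Q.mulVec ψ = ψ := orthProj_fix hQ hψW
  have hPQ : P * Q = proj d ψ := by
    ext a b
    have hu : (fun a' => Q a' b) ∈ (⨅ j : Fin K, ⨅ _ : j ≠ k, extSchmidtSpan d (𝒩 j) ψ) := by
      rw [← hQ.2.2]
      refine ⟨(fun c => if c = b then (1 : ℂ) else 0), ?_⟩
      rw [Matrix.mulVecLin_apply]
      funext a'
      show ∑ c, Q a' c * (if c = b then (1 : ℂ) else 0) = Q a' b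
      rw [Finset.sum_eq_single b]
      · rw [if_pos rfl, mul_one]
      · intro c _ hnc
        rw [if_neg hnc, mul_zero]
      · intro hb
        exact absurd (Finset.mem_univ b) hb
    have h3 := key _ hu
    have h4 : dotc ψ (fun a' => Q a' b) = (starRingEnd ℂ) (ψ b) := by
      have h4a : (starRingEnd ℂ) (dotc ψ (fun a' => Q a' b)) = (Qᴴ *ᵥ ψ) b := by
        show (starRingEnd ℂ) (∑ a', (starRingEnd ℂ) (ψ a') * Q a' b) = ∑ a', Qᴴ b a' * ψ a'
        rw [_root_.map_sum]
        refine Finset.sum_congr rfl fun a' _ => ?_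
        rw [_root_.map_mul, Complex.conj_conj, Matrix.conjTranspose_apply, starRingEnd_apply]
        ring
      have h4b : (Qᴴ *ᵥ ψ) b = ψ b := by rw [hQ.1, hQψ]
      have h4c := h4a.trans h4b
      calc dotc ψ (fun a' => Q a' b)
          = (starRingEnd ℂ) ((starRingEnd ℂ) (dotc ψ (fun a' => Q a' b))) := by
            rw [Complex.conj_conj]
        _ = (starRingEnd ℂ) (ψ b) := by rw [h4c]
    calc (P * Q) a b = (P *ᵥ (fun a' => Q a' b)) a := by
          rw [Matrix.mul_apply]
          rfl
      _ = (dotc ψ (fun a' => Q a' b) • ψ) a := by rw [h3]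
      _ = ψ a * (starRingEnd ℂ) (ψ b) := by
          rw [Pi.smul_apply, smul_eq_mul, h4]
          ring
      _ = proj d ψ a b := rfl
  have hprojH : (proj d ψ)ᴴ = proj d ψ := by
    ext a b
    rw [Matrix.conjTranspose_apply]
    show star (ψ b * (starRingEnd ℂ) (ψ a)) = ψ a * (starRingEnd ℂ) (ψ b)
    rw [← starRingEnd_apply, _root_.map_mul, Complex.conj_conj]
    ring
  have hQP' : Q * P = proj d ψ := by
    have hc := congrArg Matrix.conjTranspose hPQ
    rw [Matrix.conjTranspose_mul, hP.1, hQ.1, hprojH] at hc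
    exact hc
  rw [hPQ, hQP']


end QLS
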